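/- Let R be a non-integer real number with R > 0, let m be a natural number, and let x > 0 be real. Then, along the coupled sequence h = x/N, the Grünwald–Letnikov derivative of order R of the power function x^m recovers its Riemann–Liouville derivative: lim_{N→∞} (x/N)^{-R} ∑_{k=0}^{N} (-1)^k C(R,k) (x - k·x/N)^m = Γ(m+1)/Γ(m-R+1) · x^{m-R}. -/

import Mathlib

open Finset Filter Real

/-- Generalized binomial coefficient C(R,k) = R(R-1)⋯(R-k+1)/k! for real R and natural k. -/
noncomputable def genBinom (R : ℝ) (k : ℕ) : ℝ :=
  (∏ i ∈ Finset.range k, (R - i)) / (Nat.factorial k)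

@[simp] lemma genBinom_zero (R : ℝ) : genBinom R 0 = 1 := by simp [genBinom]

lemma genBinom_pascal (R : ℝ) (k : ℕ) :
    genBinom R (k + 1) = genBinom (R - 1) (k + 1) + genBinom (R - 1) k := by
  have hfac : ((k + 1).factorial : ℝ) ≠ 0 := Nat.cast_ne_zero.2 (Nat.factorial_ne_zero _)
  have hfac' : ((k).factorial : ℝ) ≠ 0 := Nat.cast_ne_zero.2 (Nat.factorial_ne_zero _)
  have h1 : ∏ i ∈ Finset.range (k + 1), (R - i) = (∏ i ∈ Finset.range k, (R - 1 - i)) * R := by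
    rw [Finset.prod_range_succ']
    congr 1
    · apply Finset.prod_congr rfl; intro i _; push_cast; ring
    · simp
  have h2 : ∏ i ∈ Finset.range (k + 1), (R - 1 - i)
      = (∏ i ∈ Finset.range k, (R - 1 - i)) * (R - 1 - k) := Finset.prod_range_succ _ _
  rw [genBinom, genBinom, genBinom, h1, h2, Nat.factorial_succ]
  push_cast
  field_simp
  ring

noncomputable def Ssum (R : ℝ) (i N : ℕ) : ℝ :=
  ∑ k ∈ Finset.range (N + 1), (-1 : ℝ) ^ k * genBinom R k * ((N - k).choose i : ℝ)

lemma Ssum_rec (R : ℝ) (i N : ℕ) :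
    Ssum R (i + 1) (N + 1) = Ssum R (i + 1) N + Ssum R i N := by
  rw [Ssum, Finset.sum_range_succ]
  have h0 : ((N + 1 - (N + 1)).choose (i + 1) : ℝ) = 0 := by simp
  rw [h0, mul_zero, add_zero]
  rw [Ssum, Ssum, ← Finset.sum_add_distrib]
  apply Finset.sum_congr rfl
  intro k hk
  have hkN : k ≤ N := Nat.lt_succ_iff.1 (Finset.mem_range.1 hk)
  have : N + 1 - k = (N - k) + 1 := by omega
  rw [this, Nat.choose_succ_succ]
  push_cast
  ring

lemma Ssum_base0 (R : ℝ) (N : ℕ) : Ssum R 0 N = (-1 : ℝ) ^ N * genBinom (R - 1) N := by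
  induction N with
  | zero => simp [Ssum]
  | succ n ih =>
    simp only [Ssum, Nat.choose_zero_right, Nat.cast_one, mul_one] at ih ⊢
    rw [Finset.sum_range_succ, ih, genBinom_pascal]
    ring

lemma Ssum_diag (R : ℝ) (i : ℕ) : Ssum R (i + 1) (i + 1) = 1 := by
  rw [Ssum, Finset.sum_range_succ']
  have h1 : ∀ k ∈ Finset.range (i + 1),
      (-1 : ℝ) ^ (k + 1) * genBinom R (k + 1) * ((i + 1 - (k + 1)).choose (i + 1) : ℝ) = 0 := by
    intro k hk
    have : (i + 1 - (k + 1)).choose (i + 1) = 0 := Nat.choose_eq_zero_of_lt (by omega)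
    rw [this]; simp
  rw [Finset.sum_congr rfl h1]
  simp

lemma Ssum_closed (R : ℝ) (i n : ℕ) :
    Ssum R i (i + n) = (-1 : ℝ) ^ n * genBinom (R - i - 1) n := by
  induction i generalizing R n with
  | zero => simpa using Ssum_base0 R n
  | succ i ih =>
    induction n with
    | zero =>
      simpa using Ssum_diag R i
    | succ n ihn =>
      have h1 : i + 1 + (n + 1) = (i + 1 + n) + 1 := by omega
      rw [h1, Ssum_rec, ihn]
      have h2 : i + 1 + n = i + (n + 1) := by omega
      rw [h2, ih]
      have h3 : R - (i : ℝ) - 1 - 1 = R - ((i : ℕ) + 1 : ℕ) - 1 := by push_cast; ring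
      have h4 : R - (i : ℝ) - 1 = (R - ((i : ℕ) + 1 : ℕ) - 1) + 1 := by push_cast; ring
      rw [h4, genBinom_pascal]
      push_cast
      ring

noncomputable def stc : ℕ → ℕ → ℝ
  | 0, 0 => 1
  | 0, _ + 1 => 0
  | _ + 1, 0 => 0
  | m + 1, i + 1 => ((i : ℝ) + 1) * (stc m i + stc m (i + 1))

lemma stc_eq_zero : ∀ m i : ℕ, m < i → stc m i = 0 := by
  intro m
  induction m with
  | zero => intro i hi; match i, hi with | i + 1, _ => rfl
  | succ n ih =>
    intro i hi
    match i, hi with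
    | i + 1, hi =>
      show ((i : ℝ) + 1) * (stc n i + stc n (i + 1)) = 0
      rw [ih i (by omega), ih (i + 1) (by omega)]
      ring

lemma stc_diag (m : ℕ) : stc m m = (m.factorial : ℝ) := by
  induction m with
  | zero => simp [stc]
  | succ n ih =>
    show ((n : ℝ) + 1) * (stc n n + stc n (n + 1)) = _
    rw [ih, stc_eq_zero n (n + 1) (by omega), Nat.factorial_succ]
    push_cast; ring

lemma mul_choose_key (j i : ℕ) :
    (j : ℝ) * (j.choose i : ℝ) =
      ((i : ℝ) + 1) * (j.choose (i + 1) : ℝ) + (i : ℝ) * (j.choose i : ℝ) := by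
  rcases le_or_gt i j with h | h
  · have hnat : j.choose (i + 1) * (i + 1) = j.choose i * (j - i) := Nat.choose_succ_right_eq j i
    have : ((j.choose (i + 1) * (i + 1) : ℕ) : ℝ) = ((j.choose i * (j - i) : ℕ) : ℝ) := by
      rw [hnat]
    push_cast [Nat.cast_sub h] at this
    nlinarith [this]
  · rw [Nat.choose_eq_zero_of_lt h, Nat.choose_eq_zero_of_lt (by omega)]
    simp

lemma sum_shift_eq (n : ℕ) (g : ℕ → ℝ) (h0 : g 0 = 0) (h1 : g (n + 1) = 0) :
    ∑ i ∈ Finset.range (n + 1), g (i + 1) = ∑ i ∈ Finset.range (n + 1), g i := by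
  have e1 := Finset.sum_range_succ' g (n + 1)
  have e2 := Finset.sum_range_succ g (n + 1)
  rw [h0, add_zero] at e1
  rw [h1, add_zero] at e2
  rw [← e1, e2]

lemma pow_eq_sum_stc (m j : ℕ) :
    ((j : ℝ)) ^ m = ∑ i ∈ Finset.range (m + 1), stc m i * (j.choose i : ℝ) := by
  induction m with
  | zero => simp [stc]
  | succ n ih =>
    have step : ((j : ℝ)) ^ (n + 1) = ∑ i ∈ Finset.range (n + 1),
        stc n i * (((i : ℝ) + 1) * (j.choose (i + 1) : ℝ) + (i : ℝ) * (j.choose i : ℝ)) := by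
      rw [pow_succ, ih, Finset.sum_mul]
      apply Finset.sum_congr rfl
      intro i _
      rw [mul_assoc, mul_comm (j.choose i : ℝ) (j : ℝ), mul_choose_key]
    rw [step]
    -- RHS: split off i = 0 term (zero) and reindex
    rw [Finset.sum_range_succ' (fun i => stc (n + 1) i * (j.choose i : ℝ)) (n + 1)]
    have h0 : stc (n + 1) 0 * (j.choose 0 : ℝ) = 0 := by
      show (0 : ℝ) * _ = 0; ring
    rw [h0, add_zero]
    have hterm : ∀ i, stc (n + 1) (i + 1) * (j.choose (i + 1) : ℝ)
        = ((i : ℝ) + 1) * (stc n i + stc n (i + 1)) * (j.choose (i + 1) : ℝ) := fun i => rfl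
    simp only [hterm]
    rw [Finset.sum_congr rfl (fun i _ => by ring :
      ∀ i ∈ Finset.range (n + 1), stc n i * (((i : ℝ) + 1) * (j.choose (i + 1) : ℝ)
        + (i : ℝ) * (j.choose i : ℝ))
      = ((i : ℝ) + 1) * stc n i * (j.choose (i + 1) : ℝ)
        + (i : ℝ) * stc n i * (j.choose i : ℝ))]
    rw [Finset.sum_add_distrib]
    rw [Finset.sum_congr rfl (fun i _ => by ring :
      ∀ i ∈ Finset.range (n + 1), ((i : ℝ) + 1) * (stc n i + stc n (i + 1)) * (j.choose (i + 1) : ℝ)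
      = ((i : ℝ) + 1) * stc n i * (j.choose (i + 1) : ℝ)
        + ((i : ℝ) + 1) * stc n (i + 1) * (j.choose (i + 1) : ℝ))]
    rw [Finset.sum_add_distrib]
    congr 1
    -- remaining: ∑ i in range (n+1), i * stc n i * C(j,i) = ∑ i in range (n+1), (i+1) * stc n (i+1) * C(j,i+1)
    rw [Finset.sum_congr rfl (fun i _ => by push_cast; ring :
      ∀ i ∈ Finset.range (n + 1), ((i : ℝ) + 1) * stc n (i + 1) * (j.choose (i + 1) : ℝ)
        = (fun t : ℕ => (t : ℝ) * stc n t * (j.choose t : ℝ)) (i + 1))]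
    refine (sum_shift_eq n (fun i => (i : ℝ) * stc n i * (j.choose i : ℝ)) (by simp) ?_).symm
    have hz : stc n (n + 1) = 0 := stc_eq_zero n (n + 1) (by omega)
    simp [hz]

lemma key_lim (s : ℝ) (hs : ∀ j : ℕ, s + j ≠ 0) :
    Filter.Tendsto (fun n : ℕ =>
        ((n : ℝ)) ^ ((1 : ℝ) - s) * ((∏ j ∈ Finset.range n, (s + j)) / (n.factorial : ℝ)))
      Filter.atTop (nhds (1 / Real.Gamma s)) := by
  have hGamma : Real.Gamma s ≠ 0 := by
    apply Real.Gamma_ne_zero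
    intro k hk
    exact hs k (by rw [hk]; ring)
  have h1 : Filter.Tendsto (fun n : ℕ => (s * (n : ℝ)⁻¹ + 1)⁻¹) Filter.atTop (nhds 1) := by
    have h3 : Filter.Tendsto (fun n : ℕ => s * (n : ℝ)⁻¹ + 1) Filter.atTop (nhds 1) := by
      have h0 : Filter.Tendsto (fun n : ℕ => (n : ℝ)⁻¹) Filter.atTop (nhds 0) :=
        tendsto_inv_atTop_zero.comp tendsto_natCast_atTop_atTop
      have h4 := (h0.const_mul s).add
        (tendsto_const_nhds : Filter.Tendsto (fun _ : ℕ => (1:ℝ)) Filter.atTop (nhds 1))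
      simpa using h4
    have h5 := h3.inv₀ one_ne_zero
    simpa using h5
  have h2 : Filter.Tendsto (fun n : ℕ => ((s * (n : ℝ)⁻¹ + 1)⁻¹) / Real.GammaSeq s n)
      Filter.atTop (nhds (1 / Real.Gamma s)) := by
    have := h1.div (Real.GammaSeq_tendsto_Gamma s) hGamma
    exact this
  apply h2.congr'
  filter_upwards [Filter.eventually_ge_atTop 1] with n hn
  have hnpos : (0 : ℝ) < n := by exact_mod_cast hn
  have hnne : (n : ℝ) ≠ 0 := ne_of_gt hnpos
  have hfac : ((n.factorial : ℕ) : ℝ) ≠ 0 := Nat.cast_ne_zero.2 (Nat.factorial_ne_zero _)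
  have hrp : (0 : ℝ) < (n : ℝ) ^ s := Real.rpow_pos_of_pos hnpos s
  have hP : (∏ j ∈ Finset.range (n + 1), (s + (j : ℝ))) =
      (∏ j ∈ Finset.range n, (s + (j : ℝ))) * (s + n) := Finset.prod_range_succ _ _
  have hns : ((n : ℝ)) ^ ((1 : ℝ) - s) = (n : ℝ) / (n : ℝ) ^ s := by
    rw [Real.rpow_sub hnpos, Real.rpow_one]
  rw [Real.GammaSeq, hP, hns]
  have hsn : s + (n : ℝ) ≠ 0 := hs n
  have hden : s * (n : ℝ)⁻¹ + 1 = (s + n) / n := by field_simp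
  rw [hden]
  field_simp

lemma neg_one_pow_mul_prod (A : ℝ) (n : ℕ) :
    (-1 : ℝ) ^ n * ∏ j ∈ Finset.range n, (A - j) = ∏ j ∈ Finset.range n, ((j : ℝ) - A) := by
  have h : ∀ j ∈ Finset.range n, ((j : ℝ) - A) = (-1) * (A - j) := by intro j _; ring
  rw [Finset.prod_congr rfl h, Finset.prod_mul_distrib, Finset.prod_const, Finset.card_range]

lemma neg_pow_genBinom (R : ℝ) (i n : ℕ) :
    (-1 : ℝ) ^ n * genBinom (R - i - 1) n
      = (∏ j ∈ Finset.range n, (((i : ℝ) + 1 - R) + j)) / (n.factorial : ℝ) := by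
  rw [genBinom, ← mul_div_assoc, neg_one_pow_mul_prod]
  congr 1
  apply Finset.prod_congr rfl
  intro j _
  ring

lemma term_lim (R : ℝ) (hR : ∀ n : ℤ, R ≠ (n : ℝ)) (m i : ℕ) (him : i ≤ m) :
    Filter.Tendsto (fun N : ℕ =>
        (N : ℝ) ^ (R - m) * ((-1 : ℝ) ^ (N - i) * genBinom (R - i - 1) (N - i)))
      Filter.atTop
      (nhds ((if i = m then 1 else 0) / Real.Gamma ((i : ℝ) + 1 - R))) := by
  set s : ℝ := (i : ℝ) + 1 - R with hs_def
  have hs : ∀ j : ℕ, s + j ≠ 0 := by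
    intro j h
    apply hR ((i : ℤ) + 1 + j)
    push_cast
    linarith [h]
  have hsub : Filter.Tendsto (fun N : ℕ => N - i) Filter.atTop Filter.atTop :=
    tendsto_sub_atTop_nat i
  have hB2 : Filter.Tendsto (fun N : ℕ =>
      (((N - i : ℕ) : ℝ)) ^ ((1 : ℝ) - s) *
        ((∏ j ∈ Finset.range (N - i), (s + j)) / ((N - i).factorial : ℝ)))
      Filter.atTop (nhds (1 / Real.Gamma s)) := (key_lim s hs).comp hsub
  have hratio : Filter.Tendsto (fun N : ℕ => (((N - i : ℕ) : ℝ) / N)) Filter.atTop (nhds 1) := by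
    have h0 : Filter.Tendsto (fun N : ℕ => 1 - (i : ℝ) * (N : ℝ)⁻¹) Filter.atTop (nhds 1) := by
      have hinv : Filter.Tendsto (fun N : ℕ => (N : ℝ)⁻¹) Filter.atTop (nhds 0) :=
        tendsto_inv_atTop_zero.comp tendsto_natCast_atTop_atTop
      have h4 := (tendsto_const_nhds :
        Filter.Tendsto (fun _ : ℕ => (1:ℝ)) Filter.atTop (nhds 1)).sub (hinv.const_mul (i : ℝ))
      simpa using h4
    apply h0.congr'
    filter_upwards [Filter.eventually_ge_atTop (i + 1)] with N hN
    have hNne : (N : ℝ) ≠ 0 := Nat.cast_ne_zero.2 (by omega)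
    rw [Nat.cast_sub (by omega : i ≤ N)]
    field_simp
  have hratio_rpow : Filter.Tendsto (fun N : ℕ => (((N - i : ℕ) : ℝ) / N) ^ ((i : ℝ) - R))
      Filter.atTop (nhds 1) := by
    have h5 := hratio.rpow_const (p := (i : ℝ) - R) (Or.inl one_ne_zero)
    simpa using h5
  have hpow : Filter.Tendsto (fun N : ℕ => (N : ℝ) ^ ((i : ℝ) - m)) Filter.atTop
      (nhds (if i = m then 1 else 0)) := by
    rcases eq_or_lt_of_le him with h | h
    · subst h
      simp only [sub_self, Real.rpow_zero, if_pos rfl]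
      exact tendsto_const_nhds
    · rw [if_neg (by omega)]
      have h1 : Filter.Tendsto (fun y : ℝ => y ^ (-((m : ℝ) - i))) Filter.atTop (nhds 0) :=
        tendsto_rpow_neg_atTop (by push_cast; simp; omega)
      have h2 := h1.comp tendsto_natCast_atTop_atTop
      have h3 : -((m : ℝ) - i) = (i : ℝ) - m := by ring
      rw [h3] at h2; exact h2
  -- combine
  have hmain := (hpow.mul hratio_rpow).mul hB2
  rw [mul_one] at hmain
  have hval : (if i = m then (1:ℝ) else 0) * (1 / Real.Gamma s)
      = (if i = m then (1:ℝ) else 0) / Real.Gamma s := by rw [mul_one_div]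
  rw [hval] at hmain
  apply hmain.congr'
  filter_upwards [Filter.eventually_ge_atTop (i + 1)] with N hN
  have hNpos : (0 : ℝ) < N := by exact_mod_cast Nat.pos_of_ne_zero (by omega)
  have hnipos : (0 : ℝ) < ((N - i : ℕ) : ℝ) := by exact_mod_cast Nat.sub_pos_of_lt (by omega)
  rw [neg_pow_genBinom R i (N - i), ← hs_def]
  have h1s : (1 : ℝ) - s = R - (i : ℝ) := by rw [hs_def]; ring
  rw [h1s]
  have hsplit : (((N - i : ℕ) : ℝ) / N) ^ ((i : ℝ) - R)
      = ((N - i : ℕ) : ℝ) ^ ((i : ℝ) - R) * (N : ℝ) ^ (R - (i : ℝ)) := by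
    rw [Real.div_rpow hnipos.le hNpos.le, div_eq_mul_inv, ← Real.rpow_neg hNpos.le, neg_sub]
  rw [hsplit]
  have eN : (N : ℝ) ^ ((i : ℝ) - m) * (N : ℝ) ^ (R - (i : ℝ)) = (N : ℝ) ^ (R - (m : ℝ)) := by
    rw [← Real.rpow_add hNpos]; ring_nf
  have eM : ((N - i : ℕ) : ℝ) ^ ((i : ℝ) - R) * ((N - i : ℕ) : ℝ) ^ (R - (i : ℝ)) = 1 := by
    rw [← Real.rpow_add hnipos]; simp
  calc (N : ℝ) ^ ((i : ℝ) - m) * (((N - i : ℕ) : ℝ) ^ ((i : ℝ) - R) * (N : ℝ) ^ (R - (i : ℝ))) *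
        (((N - i : ℕ) : ℝ) ^ (R - (i : ℝ)) *
          ((∏ j ∈ Finset.range (N - i), (s + j)) / ((N - i).factorial : ℝ)))
      = ((N : ℝ) ^ ((i : ℝ) - m) * (N : ℝ) ^ (R - (i : ℝ))) *
        ((((N - i : ℕ) : ℝ) ^ ((i : ℝ) - R)) * (((N - i : ℕ) : ℝ) ^ (R - (i : ℝ)))) *
        ((∏ j ∈ Finset.range (N - i), (s + j)) / ((N - i).factorial : ℝ)) := by ring
    _ = (N : ℝ) ^ (R - (m : ℝ)) *
        ((∏ j ∈ Finset.range (N - i), (s + j)) / ((N - i).factorial : ℝ)) := by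
        rw [eN, eM]; ring

/-- For non-integer R > 0, natural m, and x > 0, the Grünwald–Letnikov derivative of
    order R of x^m along the coupled sequence h = x/N recovers the Riemann–Liouville
    derivative Γ(m+1)/Γ(m-R+1) · x^{m-R}. -/
theorem coupled_GL_power_principal_value (R : ℝ) (hR : ∀ n : ℤ, R ≠ (n : ℝ)) (hR0 : 0 < R)
    (m : ℕ) (x : ℝ) (hx : 0 < x) :
    Filter.Tendsto
      (fun N : ℕ =>
        (x / N) ^ (-R) *
          ∑ k ∈ Finset.range (N + 1),
            (-1 : ℝ) ^ k * genBinom R k * (x - k * (x / N)) ^ m)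
      Filter.atTop
      (nhds (Real.Gamma ((m : ℝ) + 1) / Real.Gamma ((m : ℝ) - R + 1) * x ^ ((m : ℝ) - R))) := by
  -- abbreviations
  have hfin : Filter.Tendsto (fun N : ℕ =>
      x ^ ((m : ℝ) - R) * ∑ i ∈ Finset.range (m + 1),
        stc m i * ((N : ℝ) ^ (R - m) * ((-1 : ℝ) ^ (N - i) * genBinom (R - i - 1) (N - i))))
      Filter.atTop
      (nhds (x ^ ((m : ℝ) - R) * ∑ i ∈ Finset.range (m + 1),
        stc m i * ((if i = m then (1:ℝ) else 0) / Real.Gamma ((i : ℝ) + 1 - R)))) := by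
    apply Filter.Tendsto.const_mul
    apply tendsto_finset_sum
    intro i hi
    exact (term_lim R hR m i (Nat.lt_succ_iff.1 (Finset.mem_range.1 hi))).const_mul (stc m i)
  have hval : ∑ i ∈ Finset.range (m + 1),
      stc m i * ((if i = m then (1:ℝ) else 0) / Real.Gamma ((i : ℝ) + 1 - R))
      = (m.factorial : ℝ) / Real.Gamma ((m : ℝ) - R + 1) := by
    rw [Finset.sum_eq_single m]
    · rw [if_pos rfl, stc_diag, mul_one_div]
      congr 2
      ring
    · intro i _ hne
      rw [if_neg hne]
      simp
    · intro h
      exact absurd (Finset.mem_range.2 (Nat.lt_succ_self m)) h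
  rw [hval] at hfin
  have hgoalval : x ^ ((m : ℝ) - R) * ((m.factorial : ℝ) / Real.Gamma ((m : ℝ) - R + 1))
      = Real.Gamma ((m : ℝ) + 1) / Real.Gamma ((m : ℝ) - R + 1) * x ^ ((m : ℝ) - R) := by
    rw [Real.Gamma_nat_eq_factorial]
    ring
  rw [hgoalval] at hfin
  apply hfin.congr'
  filter_upwards [Filter.eventually_ge_atTop (m + 1)] with N hN
  have hN0 : (0 : ℝ) < N := by exact_mod_cast Nat.pos_of_ne_zero (by omega)
  have hxN : (0 : ℝ) < x / N := div_pos hx hN0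
  -- rewrite the k-sum
  have hsum : ∑ k ∈ Finset.range (N + 1), (-1 : ℝ) ^ k * genBinom R k * (x - k * (x / N)) ^ m
      = (x / N) ^ m * ∑ i ∈ Finset.range (m + 1), stc m i * Ssum R i N := by
    have step1 : ∀ k ∈ Finset.range (N + 1),
        (-1 : ℝ) ^ k * genBinom R k * (x - k * (x / N)) ^ m
        = (x / N) ^ m * ((-1 : ℝ) ^ k * genBinom R k *
            ∑ i ∈ Finset.range (m + 1), stc m i * ((N - k).choose i : ℝ)) := by
      intro k hk
      have hkN : k ≤ N := Nat.lt_succ_iff.1 (Finset.mem_range.1 hk)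
      have hxk : x - k * (x / N) = (x / N) * ((N - k : ℕ) : ℝ) := by
        rw [Nat.cast_sub hkN]
        field_simp
      rw [hxk, mul_pow, ← pow_eq_sum_stc]
      ring
    rw [Finset.sum_congr rfl step1, ← Finset.mul_sum]
    congr 1
    have e1 : ∀ k ∈ Finset.range (N + 1),
        (-1 : ℝ) ^ k * genBinom R k * (∑ i ∈ Finset.range (m + 1), stc m i * ((N - k).choose i : ℝ))
        = ∑ i ∈ Finset.range (m + 1),
            stc m i * ((-1 : ℝ) ^ k * genBinom R k * ((N - k).choose i : ℝ)) := by
      intro k _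
      rw [Finset.mul_sum]
      exact Finset.sum_congr rfl (fun i _ => by ring)
    rw [Finset.sum_congr rfl e1, Finset.sum_comm]
    exact Finset.sum_congr rfl (fun i _ => by rw [Ssum, ← Finset.mul_sum])
  have hclosed : ∀ i ∈ Finset.range (m + 1),
      stc m i * Ssum R i N = stc m i * ((-1 : ℝ) ^ (N - i) * genBinom (R - i - 1) (N - i)) := by
    intro i hi
    have him : i ≤ m := Nat.lt_succ_iff.1 (Finset.mem_range.1 hi)
    have hiN : i + (N - i) = N := by omega
    congr 1
    calc Ssum R i N = Ssum R i (i + (N - i)) := by rw [hiN]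
      _ = _ := Ssum_closed R i (N - i)
  have hpre : (x / N) ^ (-R) * (x / N) ^ m = x ^ ((m : ℝ) - R) * (N : ℝ) ^ (R - (m : ℝ)) := by
    rw [← Real.rpow_natCast (x / N) m, ← Real.rpow_add hxN]
    rw [show -R + (m : ℝ) = (m : ℝ) - R by ring]
    rw [Real.div_rpow hx.le hN0.le, div_eq_mul_inv, ← Real.rpow_neg hN0.le, neg_sub]
  rw [hsum, ← mul_assoc, hpre, Finset.sum_congr rfl hclosed]
  rw [mul_assoc]
  congr 1
  rw [Finset.mul_sum]
  exact Finset.sum_congr rfl (fun i _ => by ring)
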